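/- Let k ≥ 1 and 1 ≤ 2f ≤ k+1, and let F = Ω₂f ⊕ I_{k+1-2f} be the (k+1)×(k+1) block diagonal complex matrix where Ω₂f = [[0, I_f],[-I_f, 0]] is the standard symplectic form on C^{2f}. A block matrix g = [[A, B],[C, D]] (with A of size 2f × 2f and D of size (k+1-2f) × (k+1-2f)) satisfies gᵀFg = F if and only if B = 0, C = 0, A is symplectic (AᵀΩ₂fA = Ω₂f), and D is orthogonal (DᵀD = I). -/

import Mathlib

open Matrix

noncomputable def Omega (f : ℕ) : Matrix (Fin f ⊕ Fin f) (Fin f ⊕ Fin f) ℂ :=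
  Matrix.fromBlocks 0 1 (-1) 0

lemma Omega_transpose (f : ℕ) : (Omega f)ᵀ = -Omega f := by
  simp [Omega, Matrix.fromBlocks_transpose, Matrix.fromBlocks_neg]

lemma Omega_mul_self (f : ℕ) : Omega f * Omega f = -1 := by
  simp [Omega, Matrix.fromBlocks_multiply, ← Matrix.fromBlocks_one, Matrix.fromBlocks_neg]

lemma Omega_det_ne_zero (f : ℕ) : (Omega f).det ≠ 0 := by
  intro h
  have := congrArg Matrix.det (Omega_mul_self f)
  rw [Matrix.det_mul, h, mul_zero] at this
  have h2 : ((-1 : Matrix (Fin f ⊕ Fin f) (Fin f ⊕ Fin f) ℂ)).det = (-1) ^ (Fintype.card (Fin f ⊕ Fin f)) := by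
    rw [show (-1 : Matrix (Fin f ⊕ Fin f) (Fin f ⊕ Fin f) ℂ) = (-1 : ℂ) • 1 by simp,
      Matrix.det_smul, Matrix.det_one, mul_one]
  rw [h2] at this
  exact (pow_ne_zero _ (by norm_num : (-1 : ℂ) ≠ 0)) this.symm

theorem stmt_5 (k f : ℕ) (hk : 1 ≤ k) (hf : 1 ≤ 2 * f) (hfk : 2 * f ≤ k + 1)
    (A : Matrix (Fin f ⊕ Fin f) (Fin f ⊕ Fin f) ℂ)
    (B : Matrix (Fin f ⊕ Fin f) (Fin (k + 1 - 2 * f)) ℂ)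
    (C : Matrix (Fin (k + 1 - 2 * f)) (Fin f ⊕ Fin f) ℂ)
    (D : Matrix (Fin (k + 1 - 2 * f)) (Fin (k + 1 - 2 * f)) ℂ) :
    (Matrix.fromBlocks A B C D)ᵀ * Matrix.fromBlocks (Omega f) 0 0 1 *
        Matrix.fromBlocks A B C D = Matrix.fromBlocks (Omega f) 0 0 1 ↔
      B = 0 ∧ C = 0 ∧ Aᵀ * Omega f * A = Omega f ∧ Dᵀ * D = 1 := by
  constructor
  · intro h
    rw [Matrix.fromBlocks_transpose, Matrix.fromBlocks_multiply, Matrix.fromBlocks_multiply,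
      Matrix.fromBlocks_inj] at h
    obtain ⟨e11, e12, e21, e22⟩ := h
    simp only [Matrix.mul_zero, Matrix.zero_mul, Matrix.mul_one, Matrix.one_mul, add_zero,
      zero_add] at e11 e12 e21 e22
    -- transposes
    have t11 := congrArg Matrix.transpose e11
    have t12 := congrArg Matrix.transpose e12
    have t22 := congrArg Matrix.transpose e22
    simp only [Matrix.transpose_add, Matrix.transpose_mul, Matrix.transpose_transpose,
      Omega_transpose, Matrix.mul_neg, Matrix.neg_mul, Matrix.transpose_zero,
      Matrix.transpose_one, ← Matrix.mul_assoc] at t11 t12 t22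
    -- t11 : -(Aᵀ * Omega f * A) + Cᵀ * C = -Omega f
    have hA : Aᵀ * Omega f * A = Omega f := by
      ext i j
      have a1 := congrFun (congrFun e11 i) j
      have a2 := congrFun (congrFun t11 i) j
      simp only [Matrix.add_apply, Matrix.neg_apply, Matrix.zero_apply] at a1 a2 ⊢
      linear_combination (a1 - a2) / 2
    have hBOA : Bᵀ * Omega f * A = 0 := by
      ext i j
      have a1 := congrFun (congrFun e21 i) j
      have a2 := congrFun (congrFun t12 i) j
      simp only [Matrix.add_apply, Matrix.neg_apply, Matrix.zero_apply] at a1 a2 ⊢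
      linear_combination (a1 - a2) / 2
    have hDC : Dᵀ * C = 0 := by
      ext i j
      have a1 := congrFun (congrFun e21 i) j
      have a2 := congrFun (congrFun t12 i) j
      simp only [Matrix.add_apply, Matrix.neg_apply, Matrix.zero_apply] at a1 a2 ⊢
      linear_combination (a1 + a2) / 2
    have hDD : Dᵀ * D = 1 := by
      ext i j
      have a1 := congrFun (congrFun e22 i) j
      have a2 := congrFun (congrFun t22 i) j
      simp only [Matrix.add_apply, Matrix.neg_apply, Matrix.one_apply] at a1 a2
      by_cases hij : i = j <;> simp [hij, Matrix.one_apply] at a1 a2 ⊢ <;> linear_combination (a1 + a2) / 2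
    -- A has nonzero det
    have hAdet : IsUnit A.det := by
      have := congrArg Matrix.det hA
      rw [Matrix.det_mul, Matrix.det_mul, Matrix.det_transpose] at this
      have hΩ := Omega_det_ne_zero f
      refine isUnit_iff_ne_zero.mpr fun h0 => hΩ ?_
      rw [h0] at this; simpa using this.symm
    have hDdet : IsUnit D.det := by
      have := congrArg Matrix.det hDD
      rw [Matrix.det_mul, Matrix.det_transpose, Matrix.det_one] at this
      exact IsUnit.of_mul_eq_one _ this
    -- B = 0
    have hB : B = 0 := by
      have h1 : Bᵀ * Omega f = 0 := by
        have := congrArg (· * A⁻¹) hBOA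
        simpa [Matrix.mul_assoc, Matrix.mul_nonsing_inv A hAdet] using this
      have h2 : Bᵀ = 0 := by
        have := congrArg (· * (-Omega f)) h1
        simpa [Matrix.mul_assoc, Matrix.mul_neg, Omega_mul_self f] using this
      calc B = Bᵀᵀ := (Matrix.transpose_transpose B).symm
        _ = 0 := by rw [h2]; simp
    have hC : C = 0 := by
      have := congrArg (Dᵀ⁻¹ * ·) hDC
      have hDT : IsUnit Dᵀ.det := by rwa [Matrix.det_transpose]
      simpa [← Matrix.mul_assoc, Matrix.nonsing_inv_mul Dᵀ hDT] using this
    exact ⟨hB, hC, hA, hDD⟩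
  · rintro ⟨rfl, rfl, hA, hD⟩
    rw [Matrix.fromBlocks_transpose, Matrix.fromBlocks_multiply, Matrix.fromBlocks_multiply]
    simp [hA, hD]
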